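/- Let R be a commutative ring, M an R-module, and x_1, …, x_n ∈ M; set x_0 = −(x_1 + ⋯ + x_n). Let t_1, …, t_n ∈ R and t_0 = 1 − (t_1 + ⋯ + t_n). Then in the exterior algebra of M over R: Σ_{j=0}^n (−1)^j t_j · (x_0 ∧ ⋯ ∧ x_{j−1} ∧ x_{j+1} ∧ ⋯ ∧ x_n) = x_1 ∧ ⋯ ∧ x_n (each wedge product taken over all indices 0,…,n except j, in increasing order). -/
import Mathlib

open ExteriorAlgebra

section aux
variable {R : Type} [CommRing R] {M : Type} [AddCommGroup M] [Module R M]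

lemma my_swap (a b : M) : ι R a * ι R b = -(ι R b * ι R a) :=
  eq_neg_of_add_eq_zero_left (ι_add_mul_swap a b)

lemma my_mul_prod_zero (m : M) : ∀ (L : List M), m ∈ L →
    ι R m * (L.map (fun m => ι R m)).prod = 0 := by
  intro L
  induction L with
  | nil => simp
  | cons a L ih =>
    intro hm
    rcases List.mem_cons.mp hm with h | h
    · subst h
      rw [List.map_cons, List.prod_cons, ← mul_assoc, ι_sq_zero, zero_mul]
    · rw [List.map_cons, List.prod_cons, ← mul_assoc, my_swap, neg_mul, mul_assoc,
        ih h, mul_zero, neg_zero]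

lemma my_get_mem_eraseIdx : ∀ (L : List M) (i k : ℕ) (hk : k < L.length), k ≠ i →
    L.get ⟨k, hk⟩ ∈ L.eraseIdx i := by
  intro L
  induction L with
  | nil => intro i k hk; simp at hk
  | cons a L ih =>
    intro i k hk hki
    cases i with
    | zero =>
      cases k with
      | zero => exact absurd rfl hki
      | succ k => simpa using List.get_mem L _
    | succ i =>
      cases k with
      | zero => simp [List.eraseIdx_cons_succ]
      | succ k =>
        simp only [List.eraseIdx_cons_succ, List.get_cons_succ, List.mem_cons]
        exact Or.inr (ih i k (Nat.lt_of_succ_lt_succ hk) (fun h => hki (by rw [h])))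

lemma my_mul_prod_eraseIdx : ∀ (L : List M) (i : ℕ) (h : i < L.length),
    ι R (L.get ⟨i, h⟩) * ((L.eraseIdx i).map (fun m => ι R m)).prod
      = (-1 : R) ^ i • (L.map (fun m => ι R m)).prod := by
  intro L
  induction L with
  | nil => intro i h; simp at h
  | cons a L ih =>
    intro i h
    cases i with
    | zero => simp
    | succ i =>
      have hi : i < L.length := Nat.lt_of_succ_lt_succ h
      simp only [List.eraseIdx_cons_succ, List.get_cons_succ, List.map_cons, List.prod_cons]
      rw [← mul_assoc, my_swap, neg_mul, mul_assoc, ih i hi, pow_succ, mul_comm,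
        mul_smul, neg_one_smul, Algebra.mul_smul_comm]

end aux

/-- **The top elementary form restricts to the volume form.**  Let `R` be a commutative
ring, `M` an `R`-module, `x_1, …, x_n ∈ M`, and set `x_0 = -(x_1 + ⋯ + x_n)`.  Let
`t_1, …, t_n ∈ R` and `t_0 = 1 - (t_1 + ⋯ + t_n)`.  Then in the exterior algebra of `M`
over `R`:
`Σ_{j=0}^n (-1)^j t_j · (x_0 ∧ ⋯ ∧ x_{j-1} ∧ x_{j+1} ∧ ⋯ ∧ x_n) = x_1 ∧ ⋯ ∧ x_n`,
each wedge product being taken over all indices `0, …, n` except `j`, in increasing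
order. -/
theorem top_elementary_form_identity (R : Type) [CommRing R] (M : Type) [AddCommGroup M]
    [Module R M] (n : ℕ) (x : Fin n → M) (t : Fin n → R) :
    ∑ j : Fin (n + 1),
        ((-1 : R) ^ (j : ℕ) * (Fin.cases (1 - ∑ i, t i) t j : R)) •
          (((List.ofFn (Fin.cases (-∑ i, x i) x : Fin (n + 1) → M)).eraseIdx (j : ℕ)).map
              fun m => ExteriorAlgebra.ι R m).prod =
      ((List.ofFn x).map fun m => ExteriorAlgebra.ι R m).prod := by
  set a : M := -∑ i, x i with ha
  set F : ExteriorAlgebra R M := ((List.ofFn x).map fun m => ι R m).prod with hF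
  have hofn : List.ofFn (Fin.cases a x : Fin (n + 1) → M) = a :: List.ofFn x := by
    rw [List.ofFn_succ]
    congr 1
  rw [Fin.sum_univ_succ]
  have h0 : (((List.ofFn (Fin.cases a x : Fin (n + 1) → M)).eraseIdx ((0 : Fin (n+1)) : ℕ)).map
      fun m => ι R m).prod = F := by
    rw [hofn]; simp [hF]
  -- succ terms
  have hsucc : ∀ i : Fin n,
      ((-1 : R) ^ ((Fin.succ i : Fin (n+1)) : ℕ) * (Fin.cases (1 - ∑ i, t i) t (Fin.succ i) : R)) •
        (((List.ofFn (Fin.cases a x : Fin (n + 1) → M)).eraseIdx ((Fin.succ i : Fin (n+1)) : ℕ)).map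
          fun m => ι R m).prod = t i • F := by
    intro i
    have hlen : (i : ℕ) < (List.ofFn x).length := by simp [i.isLt]
    have hget : (List.ofFn x).get ⟨(i : ℕ), hlen⟩ = x i := by simp
    have herase : (List.ofFn (Fin.cases a x : Fin (n + 1) → M)).eraseIdx ((i : ℕ) + 1)
        = a :: (List.ofFn x).eraseIdx (i : ℕ) := by
      rw [hofn, List.eraseIdx_cons_succ]
    have hQ : ι R a * (((List.ofFn x).eraseIdx (i : ℕ)).map fun m => ι R m).prod
        = -((-1 : R) ^ (i : ℕ) • F) := by
      have : ι R a = -∑ k : Fin n, ι R (x k) := by rw [ha, map_neg, map_sum]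
      rw [this, neg_mul, Finset.sum_mul, neg_inj]
      rw [Finset.sum_eq_single i]
      · have := my_mul_prod_eraseIdx (R := R) (List.ofFn x) (i : ℕ) hlen
        rw [hget] at this
        rw [this, hF]
      · intro k _ hk
        have hmem : x k ∈ (List.ofFn x).eraseIdx (i : ℕ) := by
          have hklen : (k : ℕ) < (List.ofFn x).length := by simp [k.isLt]
          have := my_get_mem_eraseIdx (List.ofFn x) (i : ℕ) (k : ℕ) hklen
            (fun h => hk (Fin.ext h))
          simpa using this
        exact my_mul_prod_zero (R := R) (x k) _ hmem
      · intro h; exact absurd (Finset.mem_univ i) h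
    rw [Fin.cases_succ]
    have hcoe : ((Fin.succ i : Fin (n+1)) : ℕ) = (i : ℕ) + 1 := rfl
    rw [hcoe, herase, List.map_cons, List.prod_cons, hQ]
    rw [smul_neg, smul_smul]
    ring_nf
    have h2 : (-1 : R) ^ ((i : ℕ) * 2) = 1 := by rw [mul_comm, pow_mul]; norm_num
    simp [h2]
  calc ((-1 : R) ^ ((0 : Fin (n+1)) : ℕ) * (Fin.cases (1 - ∑ i, t i) t (0 : Fin (n+1)) : R)) •
        (((List.ofFn (Fin.cases a x : Fin (n + 1) → M)).eraseIdx ((0 : Fin (n+1)) : ℕ)).map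
          fun m => ι R m).prod
      + ∑ i : Fin n,
        ((-1 : R) ^ ((Fin.succ i : Fin (n+1)) : ℕ) * (Fin.cases (1 - ∑ i, t i) t (Fin.succ i) : R)) •
        (((List.ofFn (Fin.cases a x : Fin (n + 1) → M)).eraseIdx ((Fin.succ i : Fin (n+1)) : ℕ)).map
          fun m => ι R m).prod
      = (1 - ∑ i, t i) • F + ∑ i : Fin n, t i • F := by
        rw [h0]
        simp only [Fin.cases_zero, Fin.val_zero, pow_zero, one_mul]
        exact congrArg _ (Finset.sum_congr rfl fun i _ => hsucc i)
    _ = F := by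
        rw [← Finset.sum_smul, ← add_smul]
        simp
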